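/- For any finite set X of species, any function ε : X → ℝ, any x ∈ X, and ANY function φ : 2^X → ℝ, the variance of the generalized HEDGE random variable satisfies Φ'_x = Φ_x · ε_x + ψ_x² · ε_x · (1 − ε_x), where Φ_x is the g-FOB variance of Δ_φ(S_x, x), ψ_x its mean, and Φ'_x is the variance of Δ'_φ(S_x, x) under the joint distribution of S_x and I_x. -/
import Mathlib


open Finset

/-- g-FOB weight of the survivor set `S ⊆ X \ {x}`:
each species `y ≠ x` independently survives with probability `1 - ε y`. -/
noncomputable def gfobWeight {X : Type*} [Fintype X] [DecidableEq X]
    (ε : X → ℝ) (x : X) (S : Finset X) : ℝ :=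
  (∏ y ∈ S, (1 - ε y)) * ∏ y ∈ Finset.univ.erase x \ S, ε y

/-- generalized HED score `ψ_x`: the g-FOB expectation of
`Δ_φ(S, x) = φ(S ∪ {x}) - φ(S)`. -/
noncomputable def psi {X : Type*} [Fintype X] [DecidableEq X]
    (ε : X → ℝ) (φ : Finset X → ℝ) (x : X) : ℝ :=
  ∑ S ∈ (Finset.univ.erase x).powerset,
    gfobWeight ε x S * (φ (S ∪ {x}) - φ S)

/-- generalized HEDGE score `ψ'_x`: the expectation of
`Δ'_φ(S, x) = φ(S ∪ {x}) - φ(S ∪ I_x)`, averaging also over the fate `I_x` of `x`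
(`I_x = {x}` with probability `1 - ε x`, `I_x = ∅` with probability `ε x`). -/
noncomputable def psi' {X : Type*} [Fintype X] [DecidableEq X]
    (ε : X → ℝ) (φ : Finset X → ℝ) (x : X) : ℝ :=
  ∑ S ∈ (Finset.univ.erase x).powerset,
    gfobWeight ε x S *
      ((1 - ε x) * (φ (S ∪ {x}) - φ (S ∪ {x})) +
        ε x * (φ (S ∪ {x}) - φ (S ∪ ∅)))

/-- `Φ_x`: the g-FOB variance of `Δ_φ(S, x) = φ(S ∪ {x}) - φ(S)`. -/
noncomputable def PhiVar {X : Type*} [Fintype X] [DecidableEq X]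
    (ε : X → ℝ) (φ : Finset X → ℝ) (x : X) : ℝ :=
  (∑ S ∈ (Finset.univ.erase x).powerset,
    gfobWeight ε x S * (φ (S ∪ {x}) - φ S) ^ 2) - psi ε φ x ^ 2

/-- `Φ'_x`: the variance of `Δ'_φ(S, x) = φ(S ∪ {x}) - φ(S ∪ I_x)` under the joint
distribution of `S_x` and `I_x`. -/
noncomputable def PhiVar' {X : Type*} [Fintype X] [DecidableEq X]
    (ε : X → ℝ) (φ : Finset X → ℝ) (x : X) : ℝ :=
  (∑ S ∈ (Finset.univ.erase x).powerset,
    gfobWeight ε x S *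
      ((1 - ε x) * (φ (S ∪ {x}) - φ (S ∪ {x})) ^ 2 +
        ε x * (φ (S ∪ {x}) - φ (S ∪ ∅)) ^ 2)) - psi' ε φ x ^ 2

/-- Proposition 1(ii): for ANY `φ : 2^X → ℝ`, under the g-FOB model
`Φ'_x = Φ_x · ε_x + ψ_x² · ε_x · (1 − ε_x)`. -/
theorem hedge_variance_formula {X : Type*} [Fintype X] [DecidableEq X]
    (ε : X → ℝ) (x : X) (φ : Finset X → ℝ) :
    PhiVar' ε φ x = PhiVar ε φ x * ε x + psi ε φ x ^ 2 * ε x * (1 - ε x) := by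
  unfold PhiVar' PhiVar psi' psi
  simp only [sub_self, Finset.union_empty, mul_zero, zero_add,
    ne_eq, OfNat.ofNat_ne_zero, not_false_eq_true, zero_pow, mul_left_comm,
    ← Finset.mul_sum]
  ring
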